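/- arXiv:math/0701112 — 2 statements merged into one kernel-verified Lean document; each statement's English description precedes it below -/
import Mathlib

section
/- Let f : X → Y be a map from a metric space to a paracompact space, and let M be the mapping cylinder of f with the teardrop topology. Then M is paracompact. -/
open Set TopologicalSpace
open Topology

/-- The underlying set of the mapping cylinder `X × (0,1] ⊔ Y`
(`(x,0)` is identified with `f(x)`, i.e. points of `Y` serve as the identified ends). -/
def MapCyl (X Y : Type*) : Type _ := (X × ↥(Set.Ioc (0 : ℝ) 1)) ⊕ Y

/-- The generating collection for the teardrop topology on the mapping cylinder:
open subsets of `X × (0,1]` and sets `U ∪ (f⁻¹(U) × (0,ε))` for `U` open in `Y`. -/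
def mapCylBasis (X Y : Type*) [TopologicalSpace X] [TopologicalSpace Y] (f : X → Y) :
    Set (Set (MapCyl X Y)) :=
  {s | ∃ u : Set (X × ↥(Set.Ioc (0 : ℝ) 1)), IsOpen u ∧ s = Sum.inl '' u} ∪
  {s | ∃ (U : Set Y) (ε : ℝ), IsOpen U ∧ 0 < ε ∧ ε ≤ 1 ∧
      s = Sum.inr '' U ∪ Sum.inl '' {q : X × ↥(Set.Ioc (0 : ℝ) 1) | f q.1 ∈ U ∧ (q.2 : ℝ) < ε}}

namespace MapCylAux

open Function

theorem finsum_le_finsum_aux {ι : Type*} {f g : ι → ℝ} (hf : (support f).Finite)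
    (hg : (support g).Finite) (h : ∀ i, f i ≤ g i) : ∑ᶠ i, f i ≤ ∑ᶠ i, g i := by
  classical
  rw [finsum_eq_sum_of_support_subset f
      (s := (hf.union hg).toFinset) (by simp [Set.subset_union_left]),
    finsum_eq_sum_of_support_subset g
      (s := (hf.union hg).toFinset) (by simp [Set.subset_union_right])]
  exact Finset.sum_le_sum fun i _ => h i

variable {X Y : Type*} [MetricSpace X] [TopologicalSpace Y] (f : X → Y)

/-- The cone part of a basic teardrop neighbourhood. -/
def cone (A : Set Y) (ε : ℝ) : Set (X × ↥(Set.Ioc (0 : ℝ) 1)) :=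
  {q | f q.1 ∈ A ∧ (q.2 : ℝ) < ε}

/-- A basic teardrop neighbourhood. -/
def tear (A : Set Y) (ε : ℝ) : Set (MapCyl X Y) :=
  Sum.inr '' A ∪ Sum.inl '' cone f A ε

theorem tear_mono {A A' : Set Y} {ε ε' : ℝ} (hA : A ⊆ A') (hε : ε ≤ ε') :
    tear f A ε ⊆ tear f A' ε' := by
  rintro z (⟨y, hy, rfl⟩ | ⟨q, hq, rfl⟩)
  · exact Or.inl ⟨y, hA hy, rfl⟩
  · exact Or.inr ⟨q, ⟨hA hq.1, lt_of_lt_of_le hq.2 hε⟩, rfl⟩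

theorem isOpen_cone (hf : Continuous f) {A : Set Y} (hA : IsOpen A) (ε : ℝ) :
    IsOpen (cone f A ε) := by
  have h1 : IsOpen ((fun q : X × ↥(Set.Ioc (0 : ℝ) 1) => f q.1) ⁻¹' A) :=
    hA.preimage (hf.comp continuous_fst)
  have h2 : IsOpen ((fun q : X × ↥(Set.Ioc (0 : ℝ) 1) => (q.2 : ℝ)) ⁻¹' Iio ε) :=
    isOpen_Iio.preimage (continuous_subtype_val.comp continuous_snd)
  exact h1.inter h2

theorem isOpen_inl_image {u : Set (X × ↥(Set.Ioc (0 : ℝ) 1))} (hu : IsOpen u) :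
    IsOpen[generateFrom (mapCylBasis X Y f)] (Sum.inl '' u) :=
  isOpen_generateFrom_of_mem (Or.inl ⟨u, hu, rfl⟩)

theorem isOpen_tear (hf : Continuous f) {A : Set Y} {ε : ℝ} (hA : IsOpen A) (h0 : 0 < ε)
    (h1 : ε ≤ 1) : IsOpen[generateFrom (mapCylBasis X Y f)] (tear f A ε) :=
  isOpen_generateFrom_of_mem (Or.inr ⟨A, ε, hA, h0, h1, rfl⟩)

theorem continuous_inl (hf : Continuous f) :
    Continuous[_, generateFrom (mapCylBasis X Y f)]
      (Sum.inl : X × ↥(Set.Ioc (0 : ℝ) 1) → MapCyl X Y) := by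
  refine continuous_generateFrom_iff.2 ?_
  rintro s (⟨u, hu, rfl⟩ | ⟨A, ε, hA, h0, h1, rfl⟩)
  · exact (congrArg IsOpen (Set.preimage_image_eq u (Sum.inl_injective (β := Y)))).mpr hu
  · have : (Sum.inl : X × ↥(Set.Ioc (0 : ℝ) 1) → MapCyl X Y) ⁻¹'
        (Sum.inr '' A ∪ Sum.inl ''
          {q : X × ↥(Set.Ioc (0 : ℝ) 1) | f q.1 ∈ A ∧ (q.2 : ℝ) < ε}) = cone f A ε := by
      ext q
      constructor
      · rintro (⟨y, -, h⟩ | h)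
        · exact absurd h (by simp)
        · rcases h with ⟨q', hq', hq'eq⟩
          cases Sum.inl_injective hq'eq
          exact hq'
      · intro hq
        exact Or.inr ⟨q, hq, rfl⟩
    refine (congrArg IsOpen this).mpr ?_
    exact isOpen_cone f hf hA ε

/-- Every open set containing `Sum.inr y` contains a basic teardrop neighbourhood. -/
theorem exists_tear_subset (s : Set (MapCyl X Y))
    (hs : IsOpen[generateFrom (mapCylBasis X Y f)] s) {y : Y} (hy : Sum.inr y ∈ s) :
    ∃ (A : Set Y) (ε : ℝ), IsOpen A ∧ 0 < ε ∧ ε ≤ 1 ∧ y ∈ A ∧ tear f A ε ⊆ s := by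
  induction hs with
  | basic t ht =>
    rcases ht with ⟨u, hu, rfl⟩ | ⟨A, ε, hA, h0, h1, rfl⟩
    · exact absurd hy (by rintro ⟨q, -, h⟩; exact Sum.inl_ne_inr h)
    · refine ⟨A, ε, hA, h0, h1, ?_, subset_rfl⟩
      rcases hy with ⟨z, hz, h⟩ | ⟨q, -, h⟩
      · cases h; exact hz
      · exact (Sum.inl_ne_inr h).elim
  | univ => exact ⟨univ, 1, isOpen_univ, one_pos, le_rfl, mem_univ y, subset_univ _⟩
  | inter t₁ t₂ _ _ ih₁ ih₂ =>
    obtain ⟨A₁, ε₁, hA₁, h01, h11, hy1, hs1⟩ := ih₁ hy.1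
    obtain ⟨A₂, ε₂, hA₂, h02, h12, hy2, hs2⟩ := ih₂ hy.2
    refine ⟨A₁ ∩ A₂, min ε₁ ε₂, hA₁.inter hA₂, lt_min h01 h02, (min_le_left _ _).trans h11,
      ⟨hy1, hy2⟩, subset_inter ?_ ?_⟩
    · exact (tear_mono f inter_subset_left (min_le_left _ _)).trans hs1
    · exact (tear_mono f inter_subset_right (min_le_right _ _)).trans hs2
  | sUnion S _ ih =>
    obtain ⟨t, htS, hyt⟩ := hy
    obtain ⟨A, ε, hA, h0, h1, hyA, hsub⟩ := ih t htS hyt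
    exact ⟨A, ε, hA, h0, h1, hyA, hsub.trans (subset_sUnion_of_mem htS)⟩

end MapCylAux

open MapCylAux Function

/-- Let `f : X → Y` be a map from a metric space to a paracompact space, and let `M` be the
mapping cylinder of `f` with the teardrop topology.  Then `M` is paracompact. -/
theorem mapCyl_paracompact (X Y : Type*) [MetricSpace X] [TopologicalSpace Y]
    [ParacompactSpace Y] (f : X → Y) (hf : Continuous f) :
    @ParacompactSpace (MapCyl X Y) (TopologicalSpace.generateFrom (mapCylBasis X Y f)) := by
  classical
  letI T : TopologicalSpace (MapCyl X Y) := generateFrom (mapCylBasis X Y f)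
  constructor
  intro α s ho hu
  -- choose, for each point of `Y`, a basic teardrop neighbourhood inside some member of the cover
  have hy : ∀ y : Y, ∃ a, (Sum.inr y : MapCyl X Y) ∈ s a := fun y =>
    mem_iUnion.1 (hu ▸ mem_univ _)
  choose ia hia using hy
  have hbasic : ∀ y : Y, ∃ (A : Set Y) (ε : ℝ),
      IsOpen A ∧ 0 < ε ∧ ε ≤ 1 ∧ y ∈ A ∧ tear f A ε ⊆ s (ia y) :=
    fun y => exists_tear_subset f (s (ia y)) (ho (ia y)) (hia y)
  choose W ε hWo hε0 hε1 hyW hWs using hbasic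
  -- a precise locally finite refinement of `W` on `Y`
  obtain ⟨A, hAo, hAu, hAlf, hAW⟩ :=
    precise_refinement W hWo (iUnion_eq_univ_iff.2 fun y => ⟨y, hyW y⟩)
  -- a partition of unity on `X` subordinate to `fun y => f ⁻¹' (A y)`
  obtain ⟨φ, hφ⟩ := PartitionOfUnity.exists_isSubordinate (s := (univ : Set X)) isClosed_univ
    (fun y => f ⁻¹' A y) (fun y => (hAo y).preimage hf)
    (by intro x _
        obtain ⟨y, hy⟩ := mem_iUnion.1 ((hAu ▸ mem_univ (f x)) : f x ∈ ⋃ y, A y)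
        exact mem_iUnion.2 ⟨y, hy⟩)
  -- the height function
  set g : X → ℝ := fun x => ∑ᶠ y, φ y x • (ε y / 2) with hg_def
  have hgc : Continuous g :=
    φ.continuous_finsum_smul (g := fun y _ => ε y / 2) fun i x _ => continuousAt_const
  have hSfin : ∀ x : X, (support fun y => φ y x).Finite := fun x => by
    simpa [support] using φ.locallyFinite.point_finite x
  have hsupsub : ∀ (x : X) (c : Y → ℝ),
      (support fun y => φ y x • c y) ⊆ (support fun y => φ y x) := by
    intro x c y hy
    simp only [mem_support, ne_eq] at hy ⊢
    intro h
    exact hy (by rw [h, zero_smul])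
  have htermfin : ∀ x : X, (support fun y => φ y x • (ε y / 2)).Finite := fun x =>
    (hSfin x).subset (hsupsub x _)
  have hmem : ∀ (x : X) (y : Y), φ y x ≠ 0 → f x ∈ A y := fun x y h =>
    hφ y (subset_closure (mem_support.2 h))
  have hSne : ∀ x : X, ∃ y, φ y x ≠ 0 := by
    intro x
    by_contra h
    push_neg at h
    have h1 := φ.sum_eq_one (mem_univ x)
    simp only [h, finsum_zero] at h1
    exact zero_ne_one h1
  -- lower bound for `g` on the preimage of small neighbourhoods in `Y`
  have key_ge : ∀ (x : X) (c : ℝ), (∀ y, φ y x ≠ 0 → c ≤ ε y / 2) → c ≤ g x := by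
    intro x c hcy
    have h1 : ∑ᶠ y, φ y x • c ≤ ∑ᶠ y, φ y x • (ε y / 2) := by
      refine finsum_le_finsum_aux ((hSfin x).subset (hsupsub x _))
        (htermfin x) fun y => ?_
      by_cases hy : φ y x = 0
      · simp [hy]
      · exact smul_le_smul_of_nonneg_left (hcy y hy) (φ.nonneg y x)
    have h2 : ∑ᶠ y, φ y x • c = c := by
      rw [← finsum_smul' (hSfin x) c, φ.sum_eq_one (mem_univ x), one_smul]
    calc c = ∑ᶠ y, φ y x • c := h2.symm
      _ ≤ g x := h1
  -- upper bound: `g x < ε y` for some `y` with `f x ∈ A y`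
  have key_le : ∀ x : X, ∃ y, f x ∈ A y ∧ g x < ε y := by
    intro x
    obtain ⟨y₀, hy₀⟩ := hSne x
    set F : Finset Y := (hSfin x).toFinset with hF
    have hy₀F : y₀ ∈ F := by simpa [hF] using hy₀
    obtain ⟨y₁, hy₁F, hy₁max⟩ := F.exists_max_image ε ⟨y₀, hy₀F⟩
    have hy₁ne : φ y₁ x ≠ 0 := by simpa [hF] using hy₁F
    refine ⟨y₁, hmem x y₁ hy₁ne, ?_⟩
    have h1 : g x ≤ ∑ᶠ y, φ y x • (ε y₁ / 2) := by
      refine finsum_le_finsum_aux (htermfin x)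
        ((hSfin x).subset (hsupsub x _)) fun y => ?_
      by_cases hy : φ y x = 0
      · simp [hy]
      · refine smul_le_smul_of_nonneg_left ?_ (φ.nonneg y x)
        have hyF : y ∈ F := by simpa [hF] using hy
        have := hy₁max y hyF
        linarith
    have h2 : ∑ᶠ y, φ y x • (ε y₁ / 2) = ε y₁ / 2 := by
      rw [← finsum_smul' (hSfin x) (ε y₁ / 2), φ.sum_eq_one (mem_univ x), one_smul]
    have := hε0 y₁
    calc g x ≤ ε y₁ / 2 := h2 ▸ h1
      _ < ε y₁ := by linarith
  -- refinement of the cover on the metric part `X × (0,1]`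
  have cont_inl : Continuous[_, T] (Sum.inl : X × ↥(Set.Ioc (0 : ℝ) 1) → MapCyl X Y) :=
    MapCylAux.continuous_inl f hf
  obtain ⟨B, hBo, hBu, hBlf, hBs⟩ :=
    precise_refinement (fun a => (Sum.inl : X × ↥(Set.Ioc (0 : ℝ) 1) → MapCyl X Y) ⁻¹' s a)
      (fun a => (ho a).preimage cont_inl)
      (iUnion_eq_univ_iff.2 fun p => by
        obtain ⟨a, ha⟩ := mem_iUnion.1 ((hu ▸ mem_univ (Sum.inl p : MapCyl X Y)) :
          (Sum.inl p : MapCyl X Y) ∈ ⋃ a, s a)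
        exact ⟨a, ha⟩)
  -- the open region above the graph of `g`
  set G : Set (X × ↥(Set.Ioc (0 : ℝ) 1)) := {q | g q.1 < (q.2 : ℝ)} with hG
  have hGo : IsOpen G :=
    isOpen_lt (hgc.comp continuous_fst) (continuous_subtype_val.comp continuous_snd)
  -- the refined cover
  refine ⟨MapCyl X Y ⊕ α,
    Sum.elim (Sum.elim (fun _ => (∅ : Set (MapCyl X Y))) (fun y => tear f (A y) (ε y)))
      (fun a => Sum.inl '' (B a ∩ G)),
    ?_, ?_, ?_, ?_⟩
  · rintro ((p | y) | a)
    · exact isOpen_empty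
    · exact isOpen_tear f hf (hAo y) (hε0 y) (hε1 y)
    · exact isOpen_inl_image f ((hBo a).inter hGo)
  · rw [iUnion_eq_univ_iff]
    intro m
    cases m with
    | inl p =>
      by_cases hle : (p.2 : ℝ) ≤ g p.1
      · obtain ⟨y, hyA, hylt⟩ := key_le p.1
        exact ⟨Sum.inl (Sum.inr y), Or.inr ⟨p, ⟨hyA, lt_of_le_of_lt hle hylt⟩, rfl⟩⟩
      · push_neg at hle
        obtain ⟨a, ha⟩ := mem_iUnion.1 ((hBu ▸ mem_univ p) : p ∈ ⋃ a, B a)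
        exact ⟨Sum.inr a, ⟨p, ⟨ha, hle⟩, rfl⟩⟩
    | inr y =>
      obtain ⟨y', hy'⟩ := mem_iUnion.1 ((hAu ▸ mem_univ y) : y ∈ ⋃ y', A y')
      exact ⟨Sum.inl (Sum.inr y'), Or.inl ⟨y, hy', rfl⟩⟩
  · -- local finiteness
    intro m
    cases m with
    | inl p =>
      obtain ⟨t₁, ht₁, hfin₁⟩ := hAlf (f p.1)
      obtain ⟨t₂, ht₂, hfin₂⟩ := hBlf p
      have hNo : IsOpen ((fun q : X × ↥(Set.Ioc (0 : ℝ) 1) => f q.1) ⁻¹' interior t₁ ∩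
          interior t₂) :=
        (isOpen_interior.preimage (hf.comp continuous_fst)).inter isOpen_interior
      refine ⟨Sum.inl '' ((fun q : X × ↥(Set.Ioc (0 : ℝ) 1) => f q.1) ⁻¹' interior t₁ ∩
          interior t₂), (isOpen_inl_image f hNo).mem_nhds
          ⟨p, ⟨mem_interior_iff_mem_nhds.2 ht₁, mem_interior_iff_mem_nhds.2 ht₂⟩, rfl⟩, ?_⟩
      refine Set.Finite.subset
        ((hfin₁.image fun y => (Sum.inl (Sum.inr y) : MapCyl X Y ⊕ α)).union
          (hfin₂.image fun a => (Sum.inr a : MapCyl X Y ⊕ α))) ?_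
      rintro ((p' | y) | a) ⟨z, hzV, q, ⟨hq₁, hq₂⟩, rfl⟩
      · exact absurd hzV (notMem_empty _)
      · rcases hzV with ⟨w, hw, heq⟩ | ⟨q', hq', heq⟩
        · exact absurd heq (by simp)
        · cases Sum.inl_injective heq
          exact Or.inl ⟨y, ⟨f q.1, hq'.1, interior_subset hq₁⟩, rfl⟩
      · obtain ⟨q', hq', heq⟩ := hzV
        cases Sum.inl_injective heq
        exact Or.inr ⟨a, ⟨q, hq'.1, interior_subset hq₂⟩, rfl⟩
    | inr y₀ =>
      obtain ⟨t₁, ht₁, hfin₁⟩ := hAlf y₀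
      obtain ⟨y', hy'⟩ := mem_iUnion.1 ((hAu ▸ mem_univ y₀) : y₀ ∈ ⋃ y', A y')
      have hy'I : y' ∈ hfin₁.toFinset := by
        rw [Set.Finite.mem_toFinset]
        exact ⟨y₀, hy', mem_of_mem_nhds ht₁⟩
      obtain ⟨y₁, hy₁I, hy₁min⟩ := hfin₁.toFinset.exists_min_image ε ⟨y', hy'I⟩
      set ε₀ : ℝ := min (ε y₁ / 2) 1 with hε₀def
      have hε₀pos : 0 < ε₀ := lt_min (by linarith [hε0 y₁]) one_pos
      have hε₀le1 : ε₀ ≤ 1 := min_le_right _ _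
      refine ⟨tear f (interior t₁) ε₀,
        (isOpen_tear f hf isOpen_interior hε₀pos hε₀le1).mem_nhds
          (Or.inl ⟨y₀, mem_interior_iff_mem_nhds.2 ht₁, rfl⟩), ?_⟩
      refine Set.Finite.subset (hfin₁.image fun y => (Sum.inl (Sum.inr y) : MapCyl X Y ⊕ α)) ?_
      rintro ((p' | y) | a) ⟨z, hzV, hzO⟩
      · exact absurd hzV (notMem_empty z)
      · refine ⟨y, ?_, rfl⟩
        rcases hzO with ⟨w, hw, rfl⟩ | ⟨q, hq, rfl⟩
        · rcases hzV with ⟨w', hw', heq⟩ | ⟨q', hq', heq⟩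
          · cases Sum.inr_injective heq
            exact ⟨w, hw', interior_subset hw⟩
          · exact absurd heq (by simp)
        · rcases hzV with ⟨w', hw', heq⟩ | ⟨q', hq', heq⟩
          · exact absurd heq (by simp)
          · cases Sum.inl_injective heq
            exact ⟨f q.1, hq'.1, interior_subset hq.1⟩
      · exfalso
        obtain ⟨q, hqBG, heq⟩ := hzV
        rcases hzO with ⟨w, hw, heq'⟩ | ⟨q', hq', heq'⟩
        · rw [← heq] at heq'
          exact absurd heq' (by simp)
        · rw [← heq] at heq'
          cases Sum.inl_injective heq'
          -- `q` lies in the cone over `interior t₁` below `ε₀`, but also above the graph of `g`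
          have hglb : ε₀ ≤ g q.1 := by
            refine key_ge q.1 ε₀ fun y hy => ?_
            have hfq : f q.1 ∈ A y := hmem q.1 y hy
            have hyI : y ∈ hfin₁.toFinset := by
              rw [Set.Finite.mem_toFinset]
              exact ⟨f q.1, hfq, interior_subset hq'.1⟩
            have := hy₁min y hyI
            calc ε₀ ≤ ε y₁ / 2 := min_le_left _ _
              _ ≤ ε y / 2 := by linarith
          have h1 : (q.2 : ℝ) < ε₀ := hq'.2
          have h2 : g q.1 < (q.2 : ℝ) := hqBG.2
          linarith
  · -- refinement
    rintro ((p | y) | a)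
    · exact ⟨(mem_iUnion.1 ((hu ▸ mem_univ (Sum.inl p : MapCyl X Y)) :
        (Sum.inl p : MapCyl X Y) ∈ ⋃ a, s a)).choose, empty_subset _⟩
    · exact ⟨ia y, (tear_mono f (hAW y) le_rfl).trans (hWs y)⟩
    · exact ⟨a, ((Set.image_mono (inter_subset_left.trans (hBs a))).trans
        (Set.image_preimage_subset _ _))⟩
end

section
/- Let X be a separable metric space which is a union of finitely many locally closed subsets, each a topological manifold (without boundary) of dimension at most n. Then X has covering dimension at most n. -/
open Set

/-- Lebesgue covering dimension at most `n`: every open cover admits an open refinement that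
still covers and in which every point lies in at most `n+1` sets. -/
def CovDimLE (X : Type*) [TopologicalSpace X] (n : ℕ) : Prop :=
  ∀ 𝒰 : Set (Set X), (∀ u ∈ 𝒰, IsOpen u) → ⋃₀ 𝒰 = univ →
    ∃ 𝒱 : Set (Set X), (∀ v ∈ 𝒱, IsOpen v) ∧ ⋃₀ 𝒱 = univ ∧
      (∀ v ∈ 𝒱, ∃ u ∈ 𝒰, v ⊆ u) ∧
      ∀ x : X, {v ∈ 𝒱 | x ∈ v}.Finite ∧ {v ∈ 𝒱 | x ∈ v}.ncard ≤ n + 1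

namespace CovDimAux

open Topology

/-! ### Zero-dimensionality -/

/-- A space is (inductively) zero-dimensional: clopen neighborhood basis. -/
def ZDSpace (Z : Type*) [TopologicalSpace Z] : Prop :=
  ∀ (z : Z) (u : Set Z), IsOpen u → z ∈ u → ∃ C : Set Z, IsClopen C ∧ z ∈ C ∧ C ⊆ u

theorem ZDSpace.of_embedding {W Z : Type*} [TopologicalSpace W] [TopologicalSpace Z]
    {f : W → Z} (hf : IsEmbedding f) (h : ZDSpace Z) : ZDSpace W := by
  intro w u hu hwu
  rw [hf.eq_induced] at hu
  rw [isOpen_induced_iff] at hu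
  obtain ⟨u', hu', rfl⟩ := hu
  obtain ⟨C, hC, hmem, hsub⟩ := h (f w) u' hu' hwu
  exact ⟨f ⁻¹' C, hC.preimage hf.continuous, hmem, fun x hx => hsub hx⟩

/-- Separated sets in a metric space can be separated by disjoint open sets. -/
theorem separated_by_open {Y : Type*} [MetricSpace Y] {S T : Set Y}
    (h1 : closure S ∩ T = ∅) (h2 : S ∩ closure T = ∅) :
    ∃ U V : Set Y, IsOpen U ∧ IsOpen V ∧ S ⊆ U ∧ T ⊆ V ∧ Disjoint U V := by
  refine ⟨{y | EMetric.infEdist y S < EMetric.infEdist y T},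
    {y | EMetric.infEdist y T < EMetric.infEdist y S}, ?_, ?_, ?_, ?_, ?_⟩
  · exact isOpen_lt EMetric.continuous_infEdist EMetric.continuous_infEdist
  · exact isOpen_lt EMetric.continuous_infEdist EMetric.continuous_infEdist
  · intro s hs
    have h0 : EMetric.infEdist s S = 0 := EMetric.infEdist_zero_of_mem hs
    have hpos : 0 < EMetric.infEdist s T := by
      refine EMetric.infEdist_pos_iff_notMem_closure.mpr ?_
      intro hc
      exact absurd (Set.mem_inter hs hc) (by rw [h2]; exact notMem_empty s)
    simpa [h0] using hpos
  · intro t ht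
    have h0 : EMetric.infEdist t T = 0 := EMetric.infEdist_zero_of_mem ht
    have hpos : 0 < EMetric.infEdist t S := by
      refine EMetric.infEdist_pos_iff_notMem_closure.mpr ?_
      intro hc
      exact absurd (Set.mem_inter hc ht) (by rw [h1]; exact notMem_empty t)
    simpa [h0] using hpos
  · rw [Set.disjoint_left]
    intro y hy hy'
    exact absurd (lt_trans (α := ENNReal) hy hy') (lt_irrefl _)

/-- `M` has small neighborhoods (in the ambient space) whose frontier misses `M`. -/
def ExtZD {X : Type*} [TopologicalSpace X] (M : Set X) : Prop :=
  ∀ x ∈ M, ∀ u : Set X, IsOpen u → x ∈ u →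
    ∃ W : Set X, IsOpen W ∧ x ∈ W ∧ W ⊆ u ∧ frontier W ∩ M = ∅

theorem extZD_of_zdSpace {Y : Type*} [MetricSpace Y] (M : Set Y)
    (h : ZDSpace ↥M) : ExtZD M := by
  intro x hx u hu hxu
  obtain ⟨C, hC, hmem, hsub⟩ := h ⟨x, hx⟩ (Subtype.val ⁻¹' u)
    (hu.preimage continuous_subtype_val) (by simpa using hxu)
  obtain ⟨o, ho, hoeq⟩ := isOpen_induced_iff.mp hC.2
  obtain ⟨f, hf, hfeq⟩ := isClosed_induced_iff.mp hC.1
  set C' : Set Y := (↑) '' C with hC'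
  have hC'M : C' ⊆ M := by rintro y ⟨z, hz, rfl⟩; exact z.2
  have hC'o : C' = M ∩ o := by
    rw [hC', ← hoeq, Subtype.image_preimage_coe]
  have hC'f : C' = M ∩ f := by
    rw [hC', ← hfeq, Subtype.image_preimage_coe]
  have hsep1 : closure C' ∩ (M \ C') = ∅ := by
    apply eq_empty_iff_forall_notMem.mpr
    rintro y ⟨hyc, hyM, hyC⟩
    have : y ∈ M ∩ f := ⟨hyM, by
      have := closure_mono (le_of_eq hC'f) hyc
      have hcl : closure (M ∩ f) ⊆ f := closure_minimal (inter_subset_right) hf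
      exact hcl this⟩
    exact hyC (hC'f ▸ this)
  have hsep2 : C' ∩ closure (M \ C') = ∅ := by
    apply eq_empty_iff_forall_notMem.mpr
    rintro y ⟨hyc, hycl⟩
    have hMC : M \ C' ⊆ oᶜ := by
      rintro z ⟨hzM, hzC⟩
      intro hzo
      exact hzC (hC'o ▸ ⟨hzM, hzo⟩)
    have : y ∈ oᶜ := closure_minimal hMC (isClosed_compl_iff.mpr ho) hycl
    exact this ((hC'o ▸ hyc : y ∈ M ∩ o).2)
  obtain ⟨U', V', hU', hV', hCU, hCV, hdisj⟩ := separated_by_open hsep1 hsep2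
  refine ⟨U' ∩ u, hU'.inter hu, ⟨hCU ⟨⟨x, hx⟩, hmem, rfl⟩, hxu⟩, inter_subset_right, ?_⟩
  apply eq_empty_iff_forall_notMem.mpr
  rintro y ⟨hyfr, hyM⟩
  rw [frontier, (hU'.inter hu).interior_eq] at hyfr
  obtain ⟨hycl, hynot⟩ := hyfr
  by_cases hyC : y ∈ C'
  · have hyu : y ∈ u := by
      obtain ⟨z, hz, rfl⟩ := hyC
      exact hsub hz
    exact hynot (Set.mem_inter (hCU hyC) hyu)
  · have : y ∈ V' := hCV ⟨hyM, hyC⟩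
    have : y ∉ closure U' := by
      intro hc
      have hUV : U' ⊆ (V')ᶜ := fun a ha hav => (Set.disjoint_left.mp hdisj ha) hav
      have : y ∈ (V')ᶜ := closure_minimal hUV (isClosed_compl_iff.mpr hV') hc
      exact this ‹y ∈ V'›
    exact this (closure_mono inter_subset_left hycl)

/-! ### Disjointification and countable subcovers -/

/-- Disjointification of a countable family of open sets whose frontiers miss `M`. -/
theorem disjointify {X : Type*} [TopologicalSpace X] (M : Set X) (W : ℕ → Set X)
    (hW : ∀ k, IsOpen (W k)) (hfr : ∀ k, frontier (W k) ∩ M = ∅) :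
    ∃ V : ℕ → Set X, (∀ k, IsOpen (V k)) ∧ (∀ k, V k ⊆ W k) ∧
      (∀ k l, k ≠ l → Disjoint (V k) (V l)) ∧ M ∩ (⋃ k, W k) ⊆ ⋃ k, V k := by
  refine ⟨fun k => W k \ ⋃ l ∈ Finset.range k, closure (W l), ?_, ?_, ?_, ?_⟩
  · intro k
    exact (hW k).sdiff (isClosed_biUnion_finset (fun l _ => isClosed_closure))
  · intro k
    exact diff_subset
  · have key : ∀ k l, k < l → Disjoint (W k \ ⋃ i ∈ Finset.range k, closure (W i))
        (W l \ ⋃ i ∈ Finset.range l, closure (W i)) := by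
      intro k l hkl
      rw [Set.disjoint_left]
      rintro x ⟨hxk, -⟩ ⟨-, hnot⟩
      exact hnot (Set.mem_biUnion (Finset.mem_range.mpr hkl) (subset_closure hxk))
    intro k l hkl
    rcases lt_or_gt_of_ne hkl with h | h
    · exact key k l h
    · exact (key l k h).symm
  · rintro x ⟨hxM, hxU⟩
    have hne : ∃ k, x ∈ closure (W k) := by
      obtain ⟨k, hk⟩ := mem_iUnion.mp hxU
      exact ⟨k, subset_closure hk⟩
    classical
    let k := Nat.find hne
    have hk : x ∈ closure (W k) := Nat.find_spec hne
    have hxW : x ∈ W k := by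
      by_contra hxW
      have : x ∈ frontier (W k) := ⟨hk, by rwa [(hW k).interior_eq]⟩
      exact absurd (Set.mem_inter this hxM) (by rw [hfr k]; exact notMem_empty x)
    refine mem_iUnion.mpr ⟨k, hxW, ?_⟩
    intro hmem
    obtain ⟨l, hl, hxl⟩ := by
      simpa using hmem
    exact absurd hxl (Nat.find_min hne hl)

/-- Extract a countable subfamily (as an `ℕ`-indexed family, padded by `∅`). -/
theorem countable_subcover {X : Type*} [TopologicalSpace X]
    [SecondCountableTopology X] {ι : Type*} (s : Set X) (W : ι → Set X)
    (hW : ∀ i, IsOpen (W i)) (hs : s ⊆ ⋃ i, W i) :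
    ∃ f : ℕ → Set X, (∀ k, f k = ∅ ∨ ∃ i, f k = W i) ∧ s ⊆ ⋃ k, f k := by
  obtain ⟨T, hTc, hTeq⟩ := TopologicalSpace.isOpen_iUnion_countable W hW
  have hcnt : (insert (∅ : Set X) (W '' T)).Countable :=
    (hTc.image W).insert _
  obtain ⟨f, hf⟩ := hcnt.exists_eq_range ⟨∅, mem_insert _ _⟩
  refine ⟨f, ?_, ?_⟩
  · intro k
    have : f k ∈ insert (∅ : Set X) (W '' T) := by rw [hf]; exact mem_range_self k
    rcases this with h | ⟨i, -, hik⟩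
    · exact Or.inl h
    · exact Or.inr ⟨i, hik.symm⟩
  · intro x hx
    obtain ⟨i, hiT, hxi⟩ := by
      have := hTeq ▸ (hs hx)
      simpa using this
    have : W i ∈ insert (∅ : Set X) (W '' T) := mem_insert_of_mem _ ⟨i, hiT, rfl⟩
    rw [hf] at this
    obtain ⟨k, hk⟩ := this
    exact mem_iUnion.mpr ⟨k, hk ▸ hxi⟩

theorem closure_inter_open_eq_empty {X : Type*} [TopologicalSpace X] {G V : Set X}
    (hG : IsOpen G) (h : V ⊆ (closure G)ᶜ) : closure V ∩ G = ∅ := by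
  apply eq_empty_iff_forall_notMem.mpr
  rintro x ⟨hxc, hxG⟩
  rw [mem_closure_iff] at hxc
  obtain ⟨y, hyG, hyV⟩ := hxc G hG hxG
  exact h hyV (subset_closure hyG)

/-! ### Separation theorems -/

/-- Weak separation: a set with `ExtZD` can be split around a disjoint closed pair. -/
theorem weak_separation {Y : Type*} [MetricSpace Y] [SecondCountableTopology Y]
    {Z : Set Y} (hZ : ExtZD Z) {P Q : Set Y} (hP : IsClosed P) (hQ : IsClosed Q)
    (hPQ : Disjoint P Q) :
    ∃ U V : Set Y, IsOpen U ∧ IsOpen V ∧ P ⊆ U ∧ Q ⊆ V ∧ Disjoint U V ∧ Z ⊆ U ∪ V := by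
  classical
  obtain ⟨G₀, H₀, hG₀, hH₀, hPG₀, hQH₀, hGH₀⟩ := NormalSpace.normal P Q hP hQ hPQ
  obtain ⟨G, hG, hPG, hclG⟩ := normal_exists_closure_subset hP hG₀ hPG₀
  obtain ⟨H, hH, hQH, hclH⟩ := normal_exists_closure_subset hQ hH₀ hQH₀
  have hclGH : closure G ∩ closure H = ∅ :=
    eq_empty_iff_forall_notMem.mpr fun x ⟨h1, h2⟩ =>
      Set.disjoint_left.mp hGH₀ (hclG h1) (hclH h2)
  have hz : ∀ z : ↥Z, ∃ W : Set Y, IsOpen W ∧ (z : Y) ∈ W ∧ frontier W ∩ Z = ∅ ∧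
      (closure W ∩ closure H = ∅ ∨ closure W ∩ closure G = ∅) := by
    intro z
    have : (z : Y) ∉ closure H ∨ (z : Y) ∉ closure G := by
      by_contra hc
      push_neg at hc
      exact absurd (Set.mem_inter hc.2 hc.1) (by rw [hclGH]; exact notMem_empty _)
    have key : ∀ C : Set Y, IsClosed C → (z : Y) ∉ C →
        ∃ W : Set Y, IsOpen W ∧ (z : Y) ∈ W ∧ frontier W ∩ Z = ∅ ∧ closure W ∩ C = ∅ := by
      intro C hC hzC
      have : (z : Y) ∈ Cᶜ := hzC
      obtain ⟨ε, hε, hball⟩ := Metric.isOpen_iff.mp hC.isOpen_compl _ this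
      obtain ⟨W, hWo, hzW, hWsub, hWfr⟩ := hZ z z.2 (Metric.ball (z : Y) (ε / 2))
        Metric.isOpen_ball (Metric.mem_ball_self (by linarith))
      refine ⟨W, hWo, hzW, hWfr, ?_⟩
      apply eq_empty_iff_forall_notMem.mpr
      rintro x ⟨hx1, hx2⟩
      have : x ∈ Metric.closedBall (z : Y) (ε / 2) :=
        (closure_minimal (hWsub.trans Metric.ball_subset_closedBall) Metric.isClosed_closedBall) hx1
      have : x ∈ Metric.ball (z : Y) ε :=
        Metric.closedBall_subset_ball (by linarith) this
      exact hball this hx2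
    rcases this with h | h
    · obtain ⟨W, h1, h2, h3, h4⟩ := key _ isClosed_closure h
      exact ⟨W, h1, h2, h3, Or.inl h4⟩
    · obtain ⟨W, h1, h2, h3, h4⟩ := key _ isClosed_closure h
      exact ⟨W, h1, h2, h3, Or.inr h4⟩
  choose Wz hWzo hWzm hWzf hWzt using hz
  have hcov : Z ⊆ ⋃ z : ↥Z, Wz z := fun x hx => mem_iUnion.mpr ⟨⟨x, hx⟩, hWzm ⟨x, hx⟩⟩
  obtain ⟨f, hf, hZf⟩ := countable_subcover Z Wz hWzo hcov
  have hfo : ∀ k, IsOpen (f k) := by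
    intro k; rcases hf k with h | ⟨i, h⟩ <;> rw [h]
    · exact isOpen_empty
    · exact hWzo i
  have hffr : ∀ k, frontier (f k) ∩ Z = ∅ := by
    intro k; rcases hf k with h | ⟨i, h⟩ <;> rw [h]
    · simp
    · exact hWzf i
  have hft : ∀ k, closure (f k) ∩ closure H = ∅ ∨ closure (f k) ∩ closure G = ∅ := by
    intro k; rcases hf k with h | ⟨i, h⟩ <;> rw [h]
    · simp
    · exact hWzt i
  obtain ⟨V', hV'o, hV'sub, hV'disj, hV'cov⟩ := disjointify Z f hfo hffr
  set tagA : ℕ → Prop := fun k => closure (f k) ∩ closure H = ∅ with htagA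
  set U₀ : Set Y := ⋃ k, if tagA k then V' k else ∅ with hU₀
  set V₀ : Set Y := ⋃ k, if tagA k then ∅ else V' k with hV₀
  have hU₀o : IsOpen U₀ := isOpen_iUnion fun k => by
    by_cases h : tagA k
    · rw [if_pos h]; exact hV'o k
    · rw [if_neg h]; exact isOpen_empty
  have hV₀o : IsOpen V₀ := isOpen_iUnion fun k => by
    by_cases h : tagA k
    · rw [if_pos h]; exact isOpen_empty
    · rw [if_neg h]; exact hV'o k
  have hU₀H : U₀ ⊆ (closure H)ᶜ := by
    rintro x hx
    obtain ⟨k, hk⟩ := mem_iUnion.mp hx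
    by_cases h : tagA k
    · rw [if_pos h] at hk
      intro hxH
      have : x ∈ closure (f k) := subset_closure (hV'sub k hk)
      have h' : closure (f k) ∩ closure H = ∅ := h
      exact absurd (Set.mem_inter this hxH) (by rw [h']; exact notMem_empty x)
    · rw [if_neg h] at hk; exact absurd hk (notMem_empty x)
  have hV₀G : V₀ ⊆ (closure G)ᶜ := by
    rintro x hx
    obtain ⟨k, hk⟩ := mem_iUnion.mp hx
    by_cases h : tagA k
    · rw [if_pos h] at hk; exact absurd hk (notMem_empty x)
    · rw [if_neg h] at hk
      intro hxG
      have ht : closure (f k) ∩ closure G = ∅ := (hft k).resolve_left h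
      have : x ∈ closure (f k) := subset_closure (hV'sub k hk)
      exact absurd (Set.mem_inter this hxG) (by rw [ht]; exact notMem_empty x)
  have hclV₀G : closure V₀ ∩ G = ∅ := closure_inter_open_eq_empty hG hV₀G
  have hclU₀H : closure U₀ ∩ H = ∅ := closure_inter_open_eq_empty hH hU₀H
  refine ⟨U₀ ∪ (G \ closure V₀), V₀ ∪ (H \ closure U₀), hU₀o.union (hG.sdiff isClosed_closure),
    hV₀o.union (hH.sdiff isClosed_closure), ?_, ?_, ?_, ?_⟩
  · intro x hx
    refine Or.inr ⟨hPG hx, fun hc => ?_⟩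
    exact absurd (Set.mem_inter hc (hPG hx)) (by rw [hclV₀G]; exact notMem_empty x)
  · intro x hx
    refine Or.inr ⟨hQH hx, fun hc => ?_⟩
    exact absurd (Set.mem_inter hc (hQH hx)) (by rw [hclU₀H]; exact notMem_empty x)
  · rw [Set.disjoint_left]
    rintro x (hx | hx) (hy | hy)
    · obtain ⟨k, hk⟩ := mem_iUnion.mp hx
      obtain ⟨l, hl⟩ := mem_iUnion.mp hy
      by_cases h1 : tagA k
      · rw [if_pos h1] at hk
        by_cases h2 : tagA l
        · rw [if_pos h2] at hl; exact absurd hl (notMem_empty x)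
        · rw [if_neg h2] at hl
          rcases eq_or_ne k l with rfl | hkl
          · exact absurd h1 h2
          · exact Set.disjoint_left.mp (hV'disj k l hkl) hk hl
      · rw [if_neg h1] at hk; exact absurd hk (notMem_empty x)
    · exact hy.2 (subset_closure hx)
    · exact hx.2 (subset_closure hy)
    · exact absurd (Set.mem_inter (subset_closure hx.1) (subset_closure hy.1))
        (by rw [hclGH]; exact notMem_empty x)
  · intro z hzZ
    have : z ∈ ⋃ k, V' k := hV'cov ⟨hzZ, hZf hzZ⟩
    obtain ⟨k, hk⟩ := mem_iUnion.mp this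
    by_cases h : tagA k
    · exact Or.inl (Or.inl (mem_iUnion.mpr ⟨k, by rw [if_pos h]; exact hk⟩))
    · exact Or.inr (Or.inl (mem_iUnion.mpr ⟨k, by rw [if_neg h]; exact hk⟩))

/-- Strongly separated pair around a disjoint closed pair, splitting a closed zero-dim set. -/
theorem sep_step {Y : Type*} [MetricSpace Y] [SecondCountableTopology Y]
    {Z : Set Y} (hzd : ExtZD Z) (hclZ : IsClosed Z) {U V : Set Y}
    (hd : Disjoint (closure U) (closure V)) :
    ∃ q : Set Y × Set Y, (IsOpen q.1 ∧ IsOpen q.2 ∧ Disjoint (closure q.1) (closure q.2)) ∧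
      closure U ⊆ q.1 ∧ closure V ⊆ q.2 ∧ Z ⊆ q.1 ∪ q.2 := by
  obtain ⟨U₀, V₀, hU₀, hV₀, hUU₀, hVV₀, hdisj, hZ₀⟩ :=
    weak_separation hzd isClosed_closure isClosed_closure hd
  set C : Set Y := Z \ V₀ with hC
  set C₂ : Set Y := Z \ U₀ with hC₂
  have hCcl : IsClosed C := hclZ.sdiff hV₀
  have hC₂cl : IsClosed C₂ := hclZ.sdiff hU₀
  have hCU₀ : C ⊆ U₀ := fun x hx => (hZ₀ hx.1).resolve_right hx.2
  have hC₂V₀ : C₂ ⊆ V₀ := fun x hx => (hZ₀ hx.1).resolve_left hx.2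
  have hP'cl : IsClosed (closure U ∪ C) := isClosed_closure.union hCcl
  have hQ'cl : IsClosed (closure V ∪ C₂) := isClosed_closure.union hC₂cl
  have hdisj' : Disjoint (closure U ∪ C) (closure V ∪ C₂) := by
    rw [Set.disjoint_left]
    rintro x (hx | hx) (hy | hy)
    · exact Set.disjoint_left.mp hd hx hy
    · exact Set.disjoint_left.mp hdisj (hUU₀ hx) (hC₂V₀ hy)
    · exact Set.disjoint_left.mp hdisj (hCU₀ hx) (hVV₀ hy)
    · exact hy.2 (hCU₀ hx)
  obtain ⟨R₀, S₀, hR₀, hS₀, hR₀s, hS₀s, hRS₀⟩ := NormalSpace.normal _ _ hP'cl hQ'cl hdisj'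
  obtain ⟨R, hR, hRs, hRcl⟩ := normal_exists_closure_subset hP'cl hR₀ hR₀s
  obtain ⟨S, hS, hSs, hScl⟩ := normal_exists_closure_subset hQ'cl hS₀ hS₀s
  refine ⟨(R, S), ⟨hR, hS, ?_⟩, (subset_union_left).trans hRs, (subset_union_left).trans hSs, ?_⟩
  · exact Set.disjoint_left.mpr fun x hx hy => Set.disjoint_left.mp hRS₀ (hRcl hx) (hScl hy)
  · intro z hz
    by_cases h : z ∈ V₀
    · exact Or.inr (hSs (Or.inr ⟨hz, fun hU₀' => Set.disjoint_left.mp hdisj hU₀' h⟩))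
    · exact Or.inl (hRs (Or.inr ⟨hz, h⟩))

/-- Countable closed sum theorem (separation form). -/
theorem sum_separation {Y : Type*} [MetricSpace Y] [SecondCountableTopology Y]
    (F : ℕ → Set Y) (hcl : ∀ k, IsClosed (F k)) (hzd : ∀ k, ExtZD (F k))
    (hcov : ⋃ k, F k = univ) {A B : Set Y} (hA : IsClosed A) (hB : IsClosed B)
    (hAB : Disjoint A B) :
    ∃ U V : Set Y, IsOpen U ∧ IsOpen V ∧ Disjoint U V ∧ A ⊆ U ∧ B ⊆ V ∧ U ∪ V = univ := by
  classical
  have base : ∃ p : Set Y × Set Y,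
      (IsOpen p.1 ∧ IsOpen p.2 ∧ Disjoint (closure p.1) (closure p.2)) ∧ A ⊆ p.1 ∧ B ⊆ p.2 := by
    obtain ⟨G₀, H₀, hG₀, hH₀, hAG₀, hBH₀, hGH₀⟩ := NormalSpace.normal A B hA hB hAB
    obtain ⟨G, hG, hAG, hGcl⟩ := normal_exists_closure_subset hA hG₀ hAG₀
    obtain ⟨H, hH, hBH, hHcl⟩ := normal_exists_closure_subset hB hH₀ hBH₀
    exact ⟨(G, H), ⟨hG, hH, Set.disjoint_left.mpr fun x hx hy =>
      Set.disjoint_left.mp hGH₀ (hGcl hx) (hHcl hy)⟩, hAG, hBH⟩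
  have step : ∀ (k : ℕ) (p : Set Y × Set Y),
      (IsOpen p.1 ∧ IsOpen p.2 ∧ Disjoint (closure p.1) (closure p.2)) →
      ∃ q : Set Y × Set Y, (IsOpen q.1 ∧ IsOpen q.2 ∧ Disjoint (closure q.1) (closure q.2)) ∧
        closure p.1 ⊆ q.1 ∧ closure p.2 ⊆ q.2 ∧ F k ⊆ q.1 ∪ q.2 :=
    fun k p hp => sep_step (hzd k) (hcl k) hp.2.2
  let g : ℕ → {p : Set Y × Set Y //
      IsOpen p.1 ∧ IsOpen p.2 ∧ Disjoint (closure p.1) (closure p.2)} := fun n =>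
    Nat.rec ⟨base.choose, base.choose_spec.1⟩
      (fun k ih => ⟨(step k ih.1 ih.2).choose, (step k ih.1 ih.2).choose_spec.1⟩) n
  have hstep : ∀ k, closure (g k).1.1 ⊆ (g (k+1)).1.1 ∧ closure (g k).1.2 ⊆ (g (k+1)).1.2 ∧
      F k ⊆ (g (k+1)).1.1 ∪ (g (k+1)).1.2 := by
    intro k
    exact (step k (g k).1 (g k).2).choose_spec.2
  have mono1 : ∀ i j, i ≤ j → (g i).1.1 ⊆ (g j).1.1 := by
    intro i j hij
    induction j, hij using Nat.le_induction with
    | base => exact Set.Subset.rfl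
    | succ j hij ih => exact ih.trans (subset_closure.trans (hstep j).1)
  have mono2 : ∀ i j, i ≤ j → (g i).1.2 ⊆ (g j).1.2 := by
    intro i j hij
    induction j, hij using Nat.le_induction with
    | base => exact Set.Subset.rfl
    | succ j hij ih => exact ih.trans (subset_closure.trans (hstep j).2.1)
  refine ⟨⋃ k, (g k).1.1, ⋃ k, (g k).1.2, isOpen_iUnion (fun k => (g k).2.1),
    isOpen_iUnion (fun k => (g k).2.2.1), ?_, ?_, ?_, ?_⟩
  · rw [Set.disjoint_left]
    intro x hx hy
    obtain ⟨i, hi⟩ := mem_iUnion.mp hx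
    obtain ⟨j, hj⟩ := mem_iUnion.mp hy
    have h1 : x ∈ (g (max i j)).1.1 := mono1 i _ (le_max_left i j) hi
    have h2 : x ∈ (g (max i j)).1.2 := mono2 j _ (le_max_right i j) hj
    exact Set.disjoint_left.mp (g (max i j)).2.2.2 (subset_closure h1) (subset_closure h2)
  · exact fun x hx => mem_iUnion.mpr ⟨0, base.choose_spec.2.1 hx⟩
  · exact fun x hx => mem_iUnion.mpr ⟨0, base.choose_spec.2.2 hx⟩
  · apply eq_univ_iff_forall.mpr
    intro x
    have : x ∈ ⋃ k, F k := hcov ▸ mem_univ x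
    obtain ⟨k, hk⟩ := mem_iUnion.mp this
    rcases (hstep k).2.2 hk with h | h
    · exact Or.inl (mem_iUnion.mpr ⟨k+1, h⟩)
    · exact Or.inr (mem_iUnion.mpr ⟨k+1, h⟩)

/-- Countable closed sum theorem for zero-dimensionality. -/
theorem zdSpace_of_closed_cover {Y : Type*} [MetricSpace Y] [SecondCountableTopology Y]
    (F : ℕ → Set Y) (hcl : ∀ k, IsClosed (F k)) (hzd : ∀ k, ZDSpace ↥(F k))
    (hcov : ⋃ k, F k = univ) : ZDSpace Y := by
  intro y u hu hyu
  have hdisj : Disjoint ({y} : Set Y) uᶜ := by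
    rw [Set.disjoint_left]; rintro x rfl hx; exact hx hyu
  obtain ⟨U, V, hU, hV, hUV, hyU, hucV, huniv⟩ := sum_separation F hcl
    (fun k => extZD_of_zdSpace (F k) (hzd k)) hcov isClosed_singleton
    (isClosed_compl_iff.mpr hu) hdisj
  have hUVc : U = Vᶜ := by
    apply Set.eq_of_subset_of_subset
    · intro x hx hxV; exact Set.disjoint_left.mp hUV hx hxV
    · intro x hx
      rcases (eq_univ_iff_forall.mp huniv x) with h | h
      · exact h
      · exact absurd h hx
  refine ⟨U, ⟨by rw [hUVc]; exact hV.isClosed_compl, hU⟩, hyU rfl, ?_⟩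
  intro x hx
  by_contra hxu
  exact Set.disjoint_left.mp hUV hx (hucV hxu)

/-! ### Zero-dimensional decomposition of `ℝ^n` -/

noncomputable def ratSet (n : ℕ) (v : Fin n → ℝ) : Finset (Fin n) :=
  @Finset.filter _ (fun i => ∃ q : ℚ, v i = (q : ℝ)) (Classical.decPred _) Finset.univ

theorem mem_ratSet_iff (n : ℕ) {v : Fin n → ℝ} {i : Fin n} :
    i ∈ ratSet n v ↔ ∃ q : ℚ, v i = (q : ℝ) := by
  simp [ratSet]

def Qset (n c : ℕ) : Set (Fin n → ℝ) := {v | (ratSet n v).card = c}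

def Pset (n : ℕ) (A : Finset (Fin n)) (q : Fin n → ℚ) : Set (Fin n → ℝ) :=
  {v | ratSet n v = A ∧ ∀ i ∈ A, v i = (q i : ℝ)}

theorem pset_zd (n : ℕ) (A : Finset (Fin n)) (q : Fin n → ℚ) : ZDSpace ↥(Pset n A q) := by
  intro z u hu hzu
  obtain ⟨u', hu', rfl⟩ := isOpen_induced_iff.mp hu
  obtain ⟨ε, hε, hball⟩ := Metric.isOpen_iff.mp hu' _ hzu
  set v : Fin n → ℝ := (z : Fin n → ℝ) with hv
  have hchoice : ∀ i : Fin n, ∃ a b : ℚ, v i - ε/2 < (a:ℝ) ∧ (a:ℝ) < v i ∧ (v i : ℝ) < b ∧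
      (b:ℝ) < v i + ε/2 := by
    intro i
    obtain ⟨a, ha1, ha2⟩ := exists_rat_btwn (show v i - ε/2 < v i by linarith)
    obtain ⟨b, hb1, hb2⟩ := exists_rat_btwn (show v i < v i + ε/2 by linarith)
    exact ⟨a, b, ha1, ha2, hb1, hb2⟩
  choose a b ha1 ha2 hb1 hb2 using hchoice
  have hirr : ∀ (w : ↥(Pset n A q)) (i : Fin n), i ∉ A → ¬ ∃ p : ℚ, (w : Fin n → ℝ) i = (p:ℝ) := by
    intro w i hiA hex
    exact hiA (w.2.1 ▸ (mem_ratSet_iff n).mpr hex)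
  refine ⟨Subtype.val ⁻¹' {w | ∀ i, i ∉ A → (a i : ℝ) < w i ∧ w i < ((b i : ℝ))}, ⟨?_, ?_⟩, ?_, ?_⟩
  · have heq : (Subtype.val ⁻¹' {w | ∀ i, i ∉ A → (a i : ℝ) < w i ∧ w i < ((b i : ℝ))} :
        Set ↥(Pset n A q)) =
        Subtype.val ⁻¹' {w | ∀ i, i ∉ A → (a i : ℝ) ≤ w i ∧ w i ≤ ((b i : ℝ))} := by
      apply Set.eq_of_subset_of_subset
      · intro w hw i hiA
        exact ⟨le_of_lt (hw i hiA).1, le_of_lt (hw i hiA).2⟩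
      · intro w hw i hiA
        have h1 := (hw i hiA).1
        have h2 := (hw i hiA).2
        have hne1 : ((w : Fin n → ℝ)) i ≠ (a i : ℝ) := fun h => hirr w i hiA ⟨a i, h⟩
        have hne2 : ((w : Fin n → ℝ)) i ≠ (b i : ℝ) := fun h => hirr w i hiA ⟨b i, h⟩
        exact ⟨lt_of_le_of_ne h1 (Ne.symm hne1), lt_of_le_of_ne h2 hne2⟩
    rw [heq]
    apply IsClosed.preimage continuous_subtype_val
    have : {w : Fin n → ℝ | ∀ i, i ∉ A → (a i : ℝ) ≤ w i ∧ w i ≤ ((b i : ℝ))} =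
        ⋂ i, {w : Fin n → ℝ | i ∉ A → (a i : ℝ) ≤ w i ∧ w i ≤ ((b i : ℝ))} := by
      ext w; simp [mem_iInter]
    rw [this]
    apply isClosed_iInter
    intro i
    by_cases hiA : i ∈ A
    · have : {w : Fin n → ℝ | i ∉ A → (a i : ℝ) ≤ w i ∧ w i ≤ ((b i : ℝ))} = univ := by
        apply eq_univ_iff_forall.mpr; intro w hc; exact absurd hiA hc
      rw [this]; exact isClosed_univ
    · have : {w : Fin n → ℝ | i ∉ A → (a i : ℝ) ≤ w i ∧ w i ≤ ((b i : ℝ))} =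
          (fun w : Fin n → ℝ => w i) ⁻¹' (Set.Icc (a i : ℝ) (b i)) := by
        ext w
        simp only [mem_setOf_eq, mem_preimage, mem_Icc]
        exact ⟨fun h => h hiA, fun h _ => h⟩
      rw [this]
      exact isClosed_Icc.preimage (continuous_apply i)
  · apply IsOpen.preimage continuous_subtype_val
    have : {w : Fin n → ℝ | ∀ i, i ∉ A → (a i : ℝ) < w i ∧ w i < ((b i : ℝ))} =
        ⋂ i, {w : Fin n → ℝ | i ∉ A → (a i : ℝ) < w i ∧ w i < ((b i : ℝ))} := by
      ext w; simp [mem_iInter]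
    rw [this]
    apply isOpen_iInter_of_finite
    intro i
    by_cases hiA : i ∈ A
    · have : {w : Fin n → ℝ | i ∉ A → (a i : ℝ) < w i ∧ w i < ((b i : ℝ))} = univ := by
        apply eq_univ_iff_forall.mpr; intro w hc; exact absurd hiA hc
      rw [this]; exact isOpen_univ
    · have : {w : Fin n → ℝ | i ∉ A → (a i : ℝ) < w i ∧ w i < ((b i : ℝ))} =
          (fun w : Fin n → ℝ => w i) ⁻¹' (Set.Ioo (a i : ℝ) (b i)) := by
        ext w
        simp only [mem_setOf_eq, mem_preimage, mem_Ioo]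
        exact ⟨fun h => h hiA, fun h _ => h⟩
      rw [this]
      exact isOpen_Ioo.preimage (continuous_apply i)
  · exact fun i hiA => ⟨ha2 i, hb1 i⟩
  · intro w hw
    apply hball
    rw [Metric.mem_ball]
    rw [dist_pi_lt_iff hε]
    intro i
    by_cases hiA : i ∈ A
    · have h1 : (w : Fin n → ℝ) i = (q i : ℝ) := w.2.2 i hiA
      have h2 : v i = (q i : ℝ) := z.2.2 i hiA
      rw [Real.dist_eq, h1, h2]
      simpa using hε
    · have h1 := hw i hiA
      rw [Real.dist_eq, abs_lt]
      constructor
      · have := ha1 i; have := h1.1; linarith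
      · have := hb2 i; have := h1.2; linarith

theorem qset_zd (n c : ℕ) : ZDSpace ↥(Qset n c) := by
  classical
  have hne : Nonempty (Finset (Fin n) × (Fin n → ℚ)) := ⟨⟨∅, fun _ => 0⟩⟩
  obtain ⟨f, hf⟩ := exists_surjective_nat (Finset (Fin n) × (Fin n → ℚ))
  apply zdSpace_of_closed_cover (fun k => Subtype.val ⁻¹' (Pset n (f k).1 (f k).2))
  · intro k
    set A := (f k).1; set q := (f k).2
    by_cases hcard : A.card = c
    · have heq : (Subtype.val ⁻¹' (Pset n A q) : Set ↥(Qset n c)) =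
          Subtype.val ⁻¹' {v | ∀ i ∈ A, v i = (q i : ℝ)} := by
        apply Set.eq_of_subset_of_subset
        · exact fun w hw => hw.2
        · intro w hw
          refine ⟨?_, hw⟩
          have hsub : A ⊆ ratSet n (w : Fin n → ℝ) := by
            intro i hiA
            exact (mem_ratSet_iff n).mpr ⟨q i, hw i hiA⟩
          have hcard' : (ratSet n (w : Fin n → ℝ)).card ≤ A.card := by
            rw [hcard]; exact le_of_eq w.2
          exact (Finset.eq_of_subset_of_card_le hsub hcard').symm
      rw [heq]
      apply IsClosed.preimage continuous_subtype_val
      have : {v : Fin n → ℝ | ∀ i ∈ A, v i = (q i : ℝ)} =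
          ⋂ i ∈ A, (fun v : Fin n → ℝ => v i) ⁻¹' {(q i : ℝ)} := by
        ext v; simp
      rw [this]
      exact isClosed_biInter fun i _ => isClosed_singleton.preimage (continuous_apply i)
    · have heq : (Subtype.val ⁻¹' (Pset n A q) : Set ↥(Qset n c)) = ∅ := by
        apply eq_empty_iff_forall_notMem.mpr
        rintro w ⟨hA, -⟩
        exact hcard (hA ▸ w.2)
      rw [heq]; exact isClosed_empty
  · intro k
    have hzd := pset_zd n (f k).1 (f k).2
    exact ZDSpace.of_embedding
      ((IsEmbedding.subtypeVal.comp IsEmbedding.subtypeVal).codRestrict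
        (Pset n (f k).1 (f k).2) (fun w => w.2)) hzd
  · apply eq_univ_iff_forall.mpr
    intro z
    set A := ratSet n (z : Fin n → ℝ) with hA
    set q : Fin n → ℚ := fun i =>
      if h : ∃ p : ℚ, (z : Fin n → ℝ) i = (p : ℝ) then h.choose else 0 with hq
    obtain ⟨k, hk⟩ := hf (A, q)
    refine mem_iUnion.mpr ⟨k, ?_⟩
    show (z : Fin n → ℝ) ∈ Pset n (f k).1 (f k).2
    rw [hk]
    refine ⟨rfl, ?_⟩
    intro i hiA
    have hex : ∃ p : ℚ, (z : Fin n → ℝ) i = (p : ℝ) := (mem_ratSet_iff n).mp hiA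
    simp only [hq, dif_pos hex]
    exact hex.choose_spec

/-! ### Padding and compact pieces from charts -/

noncomputable def pad (d n : ℕ) : (Fin d → ℝ) → (Fin n → ℝ) :=
  fun v i => if h : (i : ℕ) < d then v ⟨i, h⟩ else 0

theorem pad_continuous (d n : ℕ) : Continuous (pad d n) := by
  apply continuous_pi
  intro i
  by_cases h : (i : ℕ) < d
  · simp only [pad, dif_pos h]
    exact continuous_apply _
  · simp only [pad, dif_neg h]
    exact continuous_const

theorem pad_injective (d n : ℕ) (hdn : d ≤ n) : Function.Injective (pad d n) := by
  intro v w hvw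
  funext j
  have hj : (j : ℕ) < n := lt_of_lt_of_le j.2 hdn
  have := congrFun hvw ⟨(j : ℕ), hj⟩
  simp only [pad, dif_pos (show ((⟨(j : ℕ), hj⟩ : Fin n) : ℕ) < d from j.2)] at this
  simpa using this

/-- Transfer an injective continuous map to `ℝ^n` along a compact image. -/
theorem exists_emb_of_compact_image {α β : Type*} [TopologicalSpace α] [TopologicalSpace β]
    [T2Space β] {f : α → β} (hf : Continuous f) (hinj : Function.Injective f)
    {K : Set α} (hK : IsCompact K) (n : ℕ)
    (hψ : ∃ ψ : ↥K → (Fin n → ℝ), Continuous ψ ∧ Function.Injective ψ) :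
    ∃ ψ' : ↥(f '' K) → (Fin n → ℝ), Continuous ψ' ∧ Function.Injective ψ' := by
  obtain ⟨ψ, hψc, hψi⟩ := hψ
  haveI : CompactSpace ↥K := isCompact_iff_compactSpace.mp hK
  have hbij : Function.Bijective (fun w : ↥K => (⟨f ↑w, ⟨↑w, w.2, rfl⟩⟩ : ↥(f '' K))) := by
    constructor
    · intro w w' hww
      have : f ↑w = f ↑w' := congrArg Subtype.val hww
      exact Subtype.ext (hinj this)
    · rintro ⟨y, ⟨w, hw, rfl⟩⟩
      exact ⟨⟨w, hw⟩, rfl⟩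
  have hcont : Continuous (fun w : ↥K => (⟨f ↑w, ⟨↑w, w.2, rfl⟩⟩ : ↥(f '' K))) :=
    Continuous.subtype_mk (hf.comp continuous_subtype_val) _
  have hhomeo : ↥K ≃ₜ ↥(f '' K) :=
    Continuous.homeoOfEquivCompactToT2 (f := Equiv.ofBijective _ hbij) hcont
  exact ⟨ψ ∘ hhomeo.symm, hψc.comp hhomeo.symm.continuous,
    hψi.comp hhomeo.symm.injective⟩

/-- From a chart around a point, get a compact neighborhood with an injective map to `ℝ^n`. -/
theorem chart_piece {T : Type*} [TopologicalSpace T] [T2Space T] (n : ℕ)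
    (x : T) (h : ∃ d : ℕ, d ≤ n ∧ ∃ U : Set T, IsOpen U ∧ x ∈ U ∧
      Nonempty (↥U ≃ₜ (Fin d → ℝ))) :
    ∃ K V : Set T, IsCompact K ∧ IsOpen V ∧ x ∈ V ∧ V ⊆ K ∧
      ∃ ψ : ↥K → (Fin n → ℝ), Continuous ψ ∧ Function.Injective ψ := by
  obtain ⟨d, hdn, U, hU, hxU, ⟨e⟩⟩ := h
  set x' : ↥U := ⟨x, hxU⟩ with hx'
  set Kin : Set ↥U := e ⁻¹' (Metric.closedBall (e x') 1) with hKin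
  set B : Set ↥U := e ⁻¹' (Metric.ball (e x') 1) with hB
  have hKc : IsCompact Kin := e.isCompact_preimage.mpr (isCompact_closedBall _ _)
  have hBo : IsOpen B := Metric.isOpen_ball.preimage e.continuous
  have hxB : x' ∈ B := by
    simp only [hB, mem_preimage]
    exact Metric.mem_ball_self one_pos
  have hBK : B ⊆ Kin := fun w hw => Metric.ball_subset_closedBall hw
  refine ⟨Subtype.val '' Kin, Subtype.val '' B, hKc.image continuous_subtype_val,
    hU.isOpenMap_subtype_val B hBo, ⟨x', hxB, rfl⟩, image_mono hBK, ?_⟩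
  apply exists_emb_of_compact_image continuous_subtype_val Subtype.val_injective hKc
  refine ⟨(pad d n) ∘ (fun w : ↥Kin => e ↑w), ?_, ?_⟩
  · exact (pad_continuous d n).comp (e.continuous.comp continuous_subtype_val)
  · exact (pad_injective d n hdn).comp (e.injective.comp Subtype.val_injective)

theorem exists_compact_pieces {X : Type*} [MetricSpace X] [SecondCountableTopology X]
    [Nonempty X] (n m : ℕ) (S : Fin m → Set X) (hcover : ⋃ i, S i = univ)
    (hman : ∀ i, ∀ x : ↥(S i), ∃ d : ℕ, d ≤ n ∧ ∃ U : Set ↥(S i),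
      IsOpen U ∧ x ∈ U ∧ Nonempty (↥U ≃ₜ (Fin d → ℝ))) :
    ∃ E : ℕ → Set X, (∀ j, IsCompact (E j)) ∧ (⋃ j, E j = univ) ∧
      ∀ j, ∃ ψ : ↥(E j) → (Fin n → ℝ), Continuous ψ ∧ Function.Injective ψ := by
  classical
  have hpiece : ∀ (i : Fin m) (x : ↥(S i)), ∃ K V : Set ↥(S i), IsCompact K ∧ IsOpen V ∧
      x ∈ V ∧ V ⊆ K ∧ ∃ ψ : ↥K → (Fin n → ℝ), Continuous ψ ∧ Function.Injective ψ :=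
    fun i x => chart_piece n x (hman i x)
  choose K V hKc hVo hxV hVK hψ using hpiece
  have hsub : ∀ i : Fin m, ∃ T : Set ↥(S i), T.Countable ∧
      ⋃ x ∈ T, V i x = ⋃ x, V i x :=
    fun i => TopologicalSpace.isOpen_iUnion_countable _ (hVo i)
  choose T hTc hTeq using hsub
  have hVuniv : ∀ i : Fin m, ⋃ x, V i x = univ :=
    fun i => eq_univ_iff_forall.mpr fun x => mem_iUnion.mpr ⟨x, hxV i x⟩
  haveI : ∀ i : Fin m, Countable ↥(T i) := fun i => (hTc i).to_subtype
  have hι : Nonempty ((i : Fin m) × ↥(T i)) := by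
    obtain ⟨x₀⟩ := ‹Nonempty X›
    have : x₀ ∈ ⋃ i, S i := hcover ▸ mem_univ x₀
    obtain ⟨i₀, hi₀⟩ := mem_iUnion.mp this
    have : (⟨x₀, hi₀⟩ : ↥(S i₀)) ∈ ⋃ x ∈ T i₀, V i₀ x := by
      rw [hTeq i₀, hVuniv i₀]; exact mem_univ _
    obtain ⟨x', hx'⟩ := mem_iUnion.mp this
    obtain ⟨hx'T, -⟩ := mem_iUnion.mp hx'
    exact ⟨⟨i₀, ⟨x', hx'T⟩⟩⟩
  obtain ⟨g, hg⟩ := exists_surjective_nat ((i : Fin m) × ↥(T i))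
  refine ⟨fun j => Subtype.val '' (K (g j).1 ↑(g j).2), ?_, ?_, ?_⟩
  · exact fun j => (hKc _ _).image continuous_subtype_val
  · apply eq_univ_iff_forall.mpr
    intro x
    have : x ∈ ⋃ i, S i := hcover ▸ mem_univ x
    obtain ⟨i, hi⟩ := mem_iUnion.mp this
    have : (⟨x, hi⟩ : ↥(S i)) ∈ ⋃ x' ∈ T i, V i x' := by
      rw [hTeq i, hVuniv i]; exact mem_univ _
    obtain ⟨x', hx'⟩ := mem_iUnion.mp this
    obtain ⟨hx'T, hmem⟩ := mem_iUnion.mp hx'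
    obtain ⟨j, hj⟩ := hg ⟨i, ⟨x', hx'T⟩⟩
    refine mem_iUnion.mpr ⟨j, ?_⟩
    rw [hj]
    exact ⟨⟨x, hi⟩, hVK i x' hmem, rfl⟩
  · intro j
    exact exists_emb_of_compact_image continuous_subtype_val Subtype.val_injective
      (hKc _ _) n (hψ _ _)

/-! ### Decomposition into `n+1` zero-dimensional parts -/

theorem exists_decomposition {X : Type*} [MetricSpace X] [SecondCountableTopology X]
    (n : ℕ) (E : ℕ → Set X) (hEc : ∀ j, IsCompact (E j)) (hEcov : ⋃ j, E j = univ)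
    (hψ : ∀ j, ∃ ψ : ↥(E j) → (Fin n → ℝ), Continuous ψ ∧ Function.Injective ψ) :
    ∃ M : Fin (n+1) → Set X, (∀ c, ExtZD (M c)) ∧ ⋃ c, M c = univ := by
  classical
  choose ψ hψc hψi using hψ
  have hex : ∀ x : X, ∃ j, x ∈ E j := fun x => mem_iUnion.mp (hEcov ▸ mem_univ x)
  set jx : X → ℕ := fun x => Nat.find (hex x) with hjx
  set rank : X → ℕ := fun x => (ratSet n (ψ (jx x) ⟨x, Nat.find_spec (hex x)⟩)).card
    with hrank
  set M : ℕ → Set X := fun c => {x | rank x = c} with hM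
  have hrank_le : ∀ x, rank x ≤ n := by
    intro x
    have h1 : (ratSet n (ψ (jx x) ⟨x, Nat.find_spec (hex x)⟩)).card ≤
        (Finset.univ : Finset (Fin n)).card :=
      Finset.card_le_card (Finset.subset_univ _)
    simpa using h1
  set Earl : ℕ → Set X := fun j => ⋃ j' ∈ Finset.range j, E j' with hEarl
  have hEarlcl : ∀ j, IsClosed (Earl j) :=
    fun j => isClosed_biUnion_finset (fun j' _ => (hEc j').isClosed)
  set C : ℕ → ℕ → Set X :=
    fun j s => {x | ((s : ENNReal)+1)⁻¹ ≤ EMetric.infEdist x (Earl j)} with hC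
  have hCcl : ∀ j s, IsClosed (C j s) :=
    fun j s => isClosed_le continuous_const EMetric.continuous_infEdist
  have hnotEarl : ∀ j s x, x ∈ C j s → x ∉ Earl j := by
    intro j s x hxC hxE
    have h0 : EMetric.infEdist x (Earl j) = 0 := EMetric.infEdist_zero_of_mem hxE
    have : ((s : ENNReal)+1)⁻¹ ≤ 0 := h0 ▸ hxC
    simp [ENNReal.inv_le_iff_inv_le] at this
  have hkey : ∀ (j s : ℕ) (x : X), x ∈ E j → x ∈ C j s → jx x = j := by
    intro j s x hxE hxC
    have hnot : ∀ j' < j, x ∉ E j' := by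
      intro j' hj' hxj'
      exact hnotEarl j s x hxC (mem_biUnion (Finset.mem_range.mpr hj') hxj')
    refine le_antisymm (Nat.find_min' (hex x) hxE) ?_
    by_contra h
    push_neg at h
    exact hnot _ h (Nat.find_spec (hex x))
  have hrank_eq : ∀ (j : ℕ) (x : X) (h : x ∈ E j), jx x = j →
      rank x = (ratSet n (ψ j ⟨x, h⟩)).card := by
    intro j x h hj
    subst hj
    rfl
  have hMzd : ∀ c : ℕ, ZDSpace ↥(M c) := by
    intro c
    apply zdSpace_of_closed_cover
      (fun k => Subtype.val ⁻¹' (E (Nat.unpair k).1 ∩ C (Nat.unpair k).1 (Nat.unpair k).2))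
    · intro k
      exact ((hEc _).isClosed.inter (hCcl _ _)).preimage continuous_subtype_val
    · intro k
      set j := (Nat.unpair k).1
      set s := (Nat.unpair k).2
      haveI : CompactSpace ↥(E j) := isCompact_iff_compactSpace.mp (hEc j)
      set eJ : ↥(Subtype.val ⁻¹' (E j ∩ C j s) : Set ↥(M c)) → ↥(E j) :=
        fun y => ⟨(y : ↥(M c)), y.2.1⟩ with heJ
      have heJemb : IsEmbedding eJ := by
        have hcomp : IsEmbedding ((Subtype.val : ↥(E j) → X) ∘ eJ) := by
          have hrfl : ((Subtype.val : ↥(E j) → X) ∘ eJ) =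
              (Subtype.val : ↥(M c) → X) ∘
              (Subtype.val : ↥(Subtype.val ⁻¹' (E j ∩ C j s) : Set ↥(M c)) → ↥(M c)) := rfl
          rw [hrfl]
          exact IsEmbedding.subtypeVal.comp IsEmbedding.subtypeVal
        exact IsEmbedding.of_comp
          (Continuous.subtype_mk (continuous_subtype_val.comp continuous_subtype_val) _)
          continuous_subtype_val hcomp
      have hψemb : IsEmbedding (ψ j) :=
        ((hψc j).isClosedEmbedding (hψi j)).isEmbedding
      have hmemQ : ∀ y : ↥(Subtype.val ⁻¹' (E j ∩ C j s) : Set ↥(M c)),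
          ψ j (eJ y) ∈ Qset n c := by
        intro y
        have hjy : jx ((y : ↥(M c)) : X) = j := hkey j s _ y.2.1 y.2.2
        have hr : rank ((y : ↥(M c)) : X) = c := (y : ↥(M c)).2
        have := hrank_eq j _ y.2.1 hjy
        show (ratSet n (ψ j (eJ y))).card = c
        rw [heJ]
        rw [← this]
        exact hr
      exact ZDSpace.of_embedding
        ((hψemb.comp heJemb).codRestrict (Qset n c) hmemQ) (qset_zd n c)
    · apply eq_univ_iff_forall.mpr
      intro y
      set x : X := (y : X) with hx
      set j : ℕ := jx x with hj
      have hxE : x ∈ E j := Nat.find_spec (hex x)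
      have hxnot : x ∉ Earl j := by
        intro hxe
        simp only [hEarl, Set.mem_iUnion] at hxe
        obtain ⟨j', hj'mem, hj'x⟩ := hxe
        have h1 : jx x ≤ j' := Nat.find_min' (hex x) hj'x
        have h2 : j' < j := Finset.mem_range.mp hj'mem
        omega
      have hpos : 0 < EMetric.infEdist x (Earl j) := by
        refine EMetric.infEdist_pos_iff_notMem_closure.mpr ?_
        rwa [(hEarlcl j).closure_eq]
      obtain ⟨s, hs⟩ := ENNReal.exists_inv_nat_lt hpos.ne'
      have hsC : x ∈ C j s := by
        show ((s : ENNReal)+1)⁻¹ ≤ _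
        refine le_trans ?_ hs.le
        gcongr
        exact le_self_add
      refine mem_iUnion.mpr ⟨Nat.pair j s, ?_⟩
      show x ∈ E (Nat.unpair (Nat.pair j s)).1 ∩ C (Nat.unpair (Nat.pair j s)).1
        (Nat.unpair (Nat.pair j s)).2
      rw [Nat.unpair_pair]
      exact ⟨hxE, hsC⟩
  refine ⟨fun c => M c, fun c => extZD_of_zdSpace _ (hMzd c), ?_⟩
  apply eq_univ_iff_forall.mpr
  intro x
  exact mem_iUnion.mpr ⟨⟨rank x, Nat.lt_succ_of_le (hrank_le x)⟩, rfl⟩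

/-! ### Final assembly -/

theorem exists_disjoint_refinement {X : Type*} [MetricSpace X] [SecondCountableTopology X]
    {M : Set X} (hM : ExtZD M) (𝒰 : Set (Set X)) (h𝒰 : ∀ u ∈ 𝒰, IsOpen u)
    (hcov : M ⊆ ⋃₀ 𝒰) (hne : ∃ u, u ∈ 𝒰) :
    ∃ V : ℕ → Set X, (∀ k, IsOpen (V k)) ∧ (∀ k, ∃ u ∈ 𝒰, V k ⊆ u) ∧
      (∀ k l, k ≠ l → Disjoint (V k) (V l)) ∧ M ⊆ ⋃ k, V k := by
  have hx : ∀ x : ↥M, ∃ W : Set X, IsOpen W ∧ (x : X) ∈ W ∧ (∃ u ∈ 𝒰, W ⊆ u) ∧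
      frontier W ∩ M = ∅ := by
    intro x
    obtain ⟨u, hu𝒰, hxu⟩ := hcov x.2
    obtain ⟨W, h1, h2, h3, h4⟩ := hM x x.2 u (h𝒰 u hu𝒰) hxu
    exact ⟨W, h1, h2, ⟨u, hu𝒰, h3⟩, h4⟩
  choose W hWo hWm hWu hWf using hx
  obtain ⟨f, hf, hMf⟩ := countable_subcover M W hWo
    (fun x hx' => mem_iUnion.mpr ⟨⟨x, hx'⟩, hWm ⟨x, hx'⟩⟩)
  have hfo : ∀ k, IsOpen (f k) := by
    intro k; rcases hf k with h | ⟨i, h⟩ <;> rw [h]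
    exacts [isOpen_empty, hWo i]
  have hffr : ∀ k, frontier (f k) ∩ M = ∅ := by
    intro k; rcases hf k with h | ⟨i, h⟩ <;> rw [h]
    · simp
    · exact hWf i
  have hfu : ∀ k, ∃ u ∈ 𝒰, f k ⊆ u := by
    intro k; rcases hf k with h | ⟨i, h⟩ <;> rw [h]
    · obtain ⟨u, hu⟩ := hne; exact ⟨u, hu, empty_subset u⟩
    · exact hWu i
  obtain ⟨V, hVo, hVsub, hVdisj, hVcov⟩ := disjointify M f hfo hffr
  refine ⟨V, hVo, fun k => ?_, hVdisj, fun x hx' => hVcov ⟨hx', hMf hx'⟩⟩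
  obtain ⟨u, hu, hsub⟩ := hfu k
  exact ⟨u, hu, (hVsub k).trans hsub⟩

theorem covDimLE_of_decomposition {X : Type*} [MetricSpace X] [SecondCountableTopology X]
    (n : ℕ) (M : Fin (n+1) → Set X) (hM : ∀ c, ExtZD (M c)) (hcov : ⋃ c, M c = univ) :
    CovDimLE X n := by
  classical
  intro 𝒰 h𝒰 hUcov
  by_cases hX : IsEmpty X
  · refine ⟨∅, by simp, ?_, by simp, fun x => isEmptyElim x⟩
    rw [sUnion_empty]
    exact (univ_eq_empty_iff.mpr hX).symm
  · rw [not_isEmpty_iff] at hX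
    obtain ⟨x₀⟩ := hX
    have hne : ∃ u, u ∈ 𝒰 := by
      have : x₀ ∈ ⋃₀ 𝒰 := hUcov ▸ mem_univ x₀
      obtain ⟨u, hu, -⟩ := this
      exact ⟨u, hu⟩
    have hV : ∀ c : Fin (n+1), ∃ V : ℕ → Set X, (∀ k, IsOpen (V k)) ∧
        (∀ k, ∃ u ∈ 𝒰, V k ⊆ u) ∧ (∀ k l, k ≠ l → Disjoint (V k) (V l)) ∧
        M c ⊆ ⋃ k, V k :=
      fun c => exists_disjoint_refinement (hM c) 𝒰 h𝒰
        (by rw [hUcov]; exact subset_univ _) hne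
    choose V hVo hVu hVdisj hVcov using hV
    refine ⟨{v | ∃ c k, V c k = v}, ?_, ?_, ?_, ?_⟩
    · rintro v ⟨c, k, rfl⟩
      exact hVo c k
    · apply eq_univ_iff_forall.mpr
      intro x
      have : x ∈ ⋃ c, M c := hcov ▸ mem_univ x
      obtain ⟨c, hc⟩ := mem_iUnion.mp this
      obtain ⟨k, hk⟩ := mem_iUnion.mp (hVcov c hc)
      exact ⟨V c k, ⟨c, k, rfl⟩, hk⟩
    · rintro v ⟨c, k, rfl⟩
      exact hVu c k
    · intro x
      set T := {v ∈ {v | ∃ c k, V c k = v} | x ∈ v} with hT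
      have hinj : ∀ v : ↥T, ∃ c k : _, V c k = (v : Set X) ∧ x ∈ (v : Set X) := by
        rintro ⟨v, ⟨c, k, hvk⟩, hxv⟩
        exact ⟨c, k, hvk, hxv⟩
      choose φ κ hφ hxφ using hinj
      have hφinj : Function.Injective φ := by
        intro v w hvw
        have h1 : V (φ v) (κ v) = (v : Set X) := hφ v
        have h2 : V (φ w) (κ w) = (w : Set X) := hφ w
        rcases eq_or_ne (κ v) (κ w) with hk | hk
        · apply Subtype.ext
          rw [← h1, ← h2, hvw, hk]
        · exfalso
          have hd := hVdisj (φ w) (κ v) (κ w) hk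
          have h1' : V (φ w) (κ v) = (v : Set X) := hvw ▸ h1
          exact Set.disjoint_left.mp hd (h1' ▸ hxφ v) (h2 ▸ hxφ w)
      have hfin : T.Finite := by
        rw [← Set.finite_coe_iff]
        exact Finite.of_injective φ hφinj
      constructor
      · exact hfin
      · have h1 : T.ncard = Nat.card ↥T := (Nat.card_coe_set_eq T).symm
        rw [h1]
        calc Nat.card ↥T ≤ Nat.card (Fin (n+1)) := Nat.card_le_card_of_injective φ hφinj
        _ = n + 1 := by simp

end CovDimAux

/-- Let `X` be a separable metric space which is a union of finitely many locally closed
subsets, each a topological manifold (without boundary) of dimension at most `n`.  Then `X`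
has covering dimension at most `n`. -/
theorem covDim_le_of_finite_manifold_strata (X : Type*) [MetricSpace X]
    [TopologicalSpace.SeparableSpace X] (n m : ℕ) (S : Fin m → Set X)
    (hlc : ∀ i, IsLocallyClosed (S i)) (hcover : ⋃ i, S i = univ)
    (hman : ∀ i, ∀ x : ↥(S i), ∃ d : ℕ, d ≤ n ∧ ∃ U : Set ↥(S i),
      IsOpen U ∧ x ∈ U ∧ Nonempty (↥U ≃ₜ (Fin d → ℝ))) :
    CovDimLE X n := by
  classical
  haveI : SecondCountableTopology X := UniformSpace.secondCountable_of_separable X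
  by_cases hX : IsEmpty X
  · exact CovDimAux.covDimLE_of_decomposition n (fun _ => ∅)
      (fun c x hx => absurd hx (notMem_empty x))
      (by
        apply eq_univ_iff_forall.mpr
        intro x
        exact isEmptyElim x)
  · rw [not_isEmpty_iff] at hX
    obtain ⟨E, hEc, hEcov, hψ⟩ := CovDimAux.exists_compact_pieces n m S hcover hman
    obtain ⟨M, hM, hMcov⟩ := CovDimAux.exists_decomposition n E hEc hEcov hψ
    exact CovDimAux.covDimLE_of_decomposition n M hM hMcov
end
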